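/- In a grid poset, every element covers at most two elements and is covered by at most two elements. -/

import Mathlib

open scoped Classical

structure GridData (P : Type) [PartialOrder P] where
  m : ℕ
  chain : P → ℕ
  color : P → Fin 2

def IsIdeal {P : Type} [PartialOrder P] (t : Finset P) : Prop :=
  ∀ ⦃x⦄, x ∈ t → ∀ ⦃y⦄, y ≤ x → y ∈ t

namespace GridData

variable {P : Type} [PartialOrder P] [Fintype P]

/-- The defining properties of a grid poset. -/
def IsGridPoset (G : GridData P) : Prop :=
  1 ≤ G.m ∧
  (∀ u : P, G.chain u ∈ Finset.Icc 1 G.m) ∧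
  (∀ i ∈ Finset.Icc 1 G.m, ∃ u : P, G.chain u = i) ∧
  (∀ u v : P, G.chain u = G.chain v → u ≤ v ∨ v ≤ u) ∧
  (∀ u v : P, u ⋖ v → G.chain u = G.chain v ∨ G.chain u = G.chain v + 1)

/-- The defining properties of a two-color grid poset. -/
def IsTwoColorGridPoset (G : GridData P) : Prop :=
  G.IsGridPoset ∧
  (∀ u v : P, G.chain u = G.chain v → G.color u = G.color v) ∧
  (∀ u v : P, Relation.ReflTransGen (fun x y : P => x ⋖ y ∨ y ⋖ x) u v →
    G.chain u = G.chain v + 1 → G.color u ≠ G.color v)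

/-- The max property. -/
def MaxProperty (G : GridData P) : Prop :=
  (∀ u : P, IsMax u → G.chain u ≤ 2) ∧
  (∀ u v : P, IsMax u → IsMax v → u ≠ v → G.color u ≠ G.color v)

/-- The fiber `C i` of the chain function. -/
def fiber (G : GridData P) (i : ℕ) : Finset P :=
  Finset.univ.filter (fun u => G.chain u = i)

/-- One step in a `γ`-component of `J_color(P)`: add or remove a single vertex of
color `γ` while both sets are order ideals. -/
def GStep (G : GridData P) (γ : Fin 2) (s t : Finset P) : Prop :=
  IsIdeal s ∧ IsIdeal t ∧ ∃ u : P, G.color u = γ ∧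
    ((u ∉ s ∧ t = insert u s) ∨ (u ∉ t ∧ s = insert u t))

/-- The `γ`-component of `t` in `J_color(P)`. -/
def comp (G : GridData P) (γ : Fin 2) (t : Finset P) : Set (Finset P) :=
  {s | Relation.ReflTransGen (G.GStep γ) t s}

noncomputable def minCard (G : GridData P) (γ : Fin 2) (t : Finset P) : ℕ :=
  sInf (Finset.card '' G.comp γ t)

noncomputable def maxCard (G : GridData P) (γ : Fin 2) (t : Finset P) : ℕ :=
  sSup (Finset.card '' G.comp γ t)

/-- `m_γ(t) = 2 ρ_γ(t) - l_γ(t)`. -/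
noncomputable def mcoord (G : GridData P) (γ : Fin 2) (t : Finset P) : ℤ :=
  2 * ((t.card : ℤ) - (G.minCard γ t : ℤ)) - ((G.maxCard γ t : ℤ) - (G.minCard γ t : ℤ))

/-- The weight of an element of `J_color(P)` (color `0` is α, color `1` is β). -/
noncomputable def wt (G : GridData P) (t : Finset P) : Fin 2 → ℤ :=
  ![G.mcoord 0 t, G.mcoord 1 t]

/-- `J_color(P)` is `M`-structured. -/
def MStructured (G : GridData P) (M : Matrix (Fin 2) (Fin 2) ℤ) : Prop :=
  ∀ s t : Finset P, IsIdeal s → IsIdeal t → ∀ u : P, u ∉ s → t = insert u s →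
    G.wt s + M (G.color u) = G.wt t

end GridData

/-- In a grid poset, every element covers at most two elements and is covered
by at most two elements. -/
theorem stmt_11 {P : Type} [PartialOrder P] [Fintype P] (G : GridData P)
    (hG : G.IsGridPoset) (x : P) :
    (Finset.univ.filter (fun y : P => y ⋖ x)).card ≤ 2 ∧
    (Finset.univ.filter (fun y : P => x ⋖ y)).card ≤ 2 := by
  obtain ⟨hm, hrange, hsurj, hcomp, hcov⟩ := hG
  constructor
  · -- elements covered by x
    calc (Finset.univ.filter (fun y : P => y ⋖ x)).card
        ≤ ({G.chain x, G.chain x + 1} : Finset ℕ).card := by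
          apply Finset.card_le_card_of_injOn G.chain
          · intro y hy
            simp only [Finset.mem_coe, Finset.mem_filter] at hy
            rcases hcov y x hy.2 with h | h <;> simp [h]
          · intro a ha b hb hab
            simp only [Finset.coe_filter, Set.mem_setOf_eq] at ha hb
            rcases hcomp a b hab with h | h
            · by_contra hne
              exact (ha.2.2 (lt_of_le_of_ne h hne) hb.2.1)
            · by_contra hne
              exact (hb.2.2 (lt_of_le_of_ne h (Ne.symm hne)) ha.2.1)
      _ ≤ 2 := Finset.card_insert_le _ _ |>.trans (by simp)
  · calc (Finset.univ.filter (fun y : P => x ⋖ y)).card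
        ≤ ({G.chain x, G.chain x - 1} : Finset ℕ).card := by
          apply Finset.card_le_card_of_injOn G.chain
          · intro y hy
            simp only [Finset.mem_coe, Finset.mem_filter] at hy
            rcases hcov x y hy.2 with h | h
            · simp [h.symm]
            · simp [h]
          · intro a ha b hb hab
            simp only [Finset.coe_filter, Set.mem_setOf_eq] at ha hb
            rcases hcomp a b hab with h | h
            · by_contra hne
              exact (hb.2.2 ha.2.1 (lt_of_le_of_ne h hne))
            · by_contra hne
              exact (ha.2.2 hb.2.1 (lt_of_le_of_ne h (Ne.symm hne)))
      _ ≤ 2 := Finset.card_insert_le _ _ |>.trans (by simp)
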